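/- Let G be a connected simple undirected graph on N ≥ 2 vertices with Laplacian L, let τ ≥ 0, b0 > 0, a ≥ b0·λN(L), β_k = b0/(a+k^τ), W(k) = I − β_k·L, and Φ(k,j) = W(k−1)···W(j) for 1 ≤ j < k with Φ(k,k) = I. Let s > 0, S_η = s·I, and let S_v be symmetric positive semidefinite with smallest eigenvalue λ1(S_v). Define σ_i²(k) = (1/k²)·[ ∑_{j=1}^k e_iᵀ Φ(k,j) S_η Φ(k,j)ᵀ e_i + ∑_{j=1}^{k−1} (j·β_j)² · e_iᵀ Φ(k,j+1) S_v Φ(k,j+1)ᵀ e_i ]. Then for every k ≥ 1 and every i: k·σ_i²(k) ≥ s/N + s·(1 − 1/N)·Z_β(k) + (λ1(S_v)/N²)·χ_β(k), where Z_β(k) = (1/k)·∑_{j=1}^k ∏_{t=j}^k (1 − λN(L)·β_t)² and χ_β(k) = (1/k)·∑_{j=1}^{k−1} (j·β_j)². -/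

import Mathlib

open Filter Matrix

section Helpers

lemma vlb_psd_quad {n : Type*} [Fintype n] {M : Matrix n n ℝ} (hM : M.PosSemidef) (x : n → ℝ) :
    0 ≤ x ⬝ᵥ (M *ᵥ x) := by
  simpa using hM.dotProduct_mulVec_nonneg x

lemma vlb_psd_smul {n : Type*} [Fintype n] {M : Matrix n n ℝ} (hM : M.PosSemidef) {c : ℝ}
    (hc : 0 ≤ c) : (c • M).PosSemidef := by
  refine Matrix.PosSemidef.of_dotProduct_mulVec_nonneg ?_ fun x => ?_
  · have h := hM.1.eq
    rw [Matrix.conjTranspose_eq_transpose_of_trivial] at h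
    simp [Matrix.IsHermitian, conjTranspose_smul, h]
  · have h0 := hM.dotProduct_mulVec_nonneg x
    simp only [smul_mulVec, dotProduct_smul, smul_eq_mul]
    exact mul_nonneg hc (by simpa using h0)

lemma vlb_psd_smul_one_sub {n : Type*} [Fintype n] [DecidableEq n] {M : Matrix n n ℝ}
    (hM : M.IsHermitian) {c : ℝ} (h : ∀ i, hM.eigenvalues i ≤ c) :
    (c • (1 : Matrix n n ℝ) - M).PosSemidef := by
  have hst := hM.spectral_theorem
  set U : Matrix n n ℝ := (hM.eigenvectorUnitary : Matrix n n ℝ) with hUdef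
  have hU : U * Uᴴ = 1 := by
    simpa [Matrix.star_eq_conjTranspose] using
      (Matrix.mem_unitaryGroup_iff).mp hM.eigenvectorUnitary.2
  have hst' : M = U * Matrix.diagonal hM.eigenvalues * Uᴴ := by
    simpa [RCLike.ofReal_real_eq_id, Matrix.star_eq_conjTranspose] using hst
  have key : c • (1 : Matrix n n ℝ) - M
      = U * Matrix.diagonal (fun i => c - hM.eigenvalues i) * Uᴴ := by
    have hd : Matrix.diagonal (fun i => c - hM.eigenvalues i)
        = c • (1 : Matrix n n ℝ) - Matrix.diagonal hM.eigenvalues := by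
      rw [Matrix.smul_one_eq_diagonal, ← Matrix.diagonal_sub]
    rw [hd, Matrix.mul_sub, Matrix.sub_mul, ← hst']
    congr 1
    rw [Matrix.mul_smul, Matrix.mul_one, Matrix.smul_mul, hU]
  rw [key]
  exact (Matrix.PosSemidef.diagonal (fun i => sub_nonneg.2 (h i))).mul_mul_conjTranspose_same U

lemma vlb_psd_sub_smul_one {n : Type*} [Fintype n] [DecidableEq n] {M : Matrix n n ℝ}
    (hM : M.IsHermitian) {c : ℝ} (h : ∀ i, c ≤ hM.eigenvalues i) :
    (M - c • (1 : Matrix n n ℝ)).PosSemidef := by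
  have hst := hM.spectral_theorem
  set U : Matrix n n ℝ := (hM.eigenvectorUnitary : Matrix n n ℝ) with hUdef
  have hU : U * Uᴴ = 1 := by
    simpa [Matrix.star_eq_conjTranspose] using
      (Matrix.mem_unitaryGroup_iff).mp hM.eigenvectorUnitary.2
  have hst' : M = U * Matrix.diagonal hM.eigenvalues * Uᴴ := by
    simpa [RCLike.ofReal_real_eq_id, Matrix.star_eq_conjTranspose] using hst
  have key : M - c • (1 : Matrix n n ℝ)
      = U * Matrix.diagonal (fun i => hM.eigenvalues i - c) * Uᴴ := by
    have hd : Matrix.diagonal (fun i => hM.eigenvalues i - c)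
        = Matrix.diagonal hM.eigenvalues - c • (1 : Matrix n n ℝ) := by
      rw [Matrix.smul_one_eq_diagonal, ← Matrix.diagonal_sub]
    rw [hd, Matrix.mul_sub, Matrix.sub_mul, ← hst']
    congr 1
    rw [Matrix.mul_smul, Matrix.mul_one, Matrix.smul_mul, hU]
  rw [key]
  exact (Matrix.PosSemidef.diagonal (fun i => sub_nonneg.2 (h i))).mul_mul_conjTranspose_same U

/-- If `W - c•1` is PSD with `c ≥ 0`, then `‖W x‖² ≥ c² ‖x‖²`. -/
lemma vlb_sv_sq_bound {n : Type*} [Fintype n] [DecidableEq n] (W : Matrix n n ℝ) {c : ℝ}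
    (hc : 0 ≤ c) (h : (W - c • (1 : Matrix n n ℝ)).PosSemidef) (y : n → ℝ) :
    c ^ 2 * (y ⬝ᵥ y) ≤ (W *ᵥ y) ⬝ᵥ (W *ᵥ y) := by
  have hyy : 0 ≤ y ⬝ᵥ y := Finset.sum_nonneg fun i _ => mul_self_nonneg _
  have hWW : 0 ≤ (W *ᵥ y) ⬝ᵥ (W *ᵥ y) := Finset.sum_nonneg fun i _ => mul_self_nonneg _
  have h1 : c * (y ⬝ᵥ y) ≤ y ⬝ᵥ (W *ᵥ y) := by
    have h0 := vlb_psd_quad h y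
    rw [Matrix.sub_mulVec, dotProduct_sub, smul_mulVec, Matrix.one_mulVec,
      dotProduct_smul, smul_eq_mul] at h0
    linarith
  have hcs : (y ⬝ᵥ (W *ᵥ y)) ^ 2 ≤ (y ⬝ᵥ y) * ((W *ᵥ y) ⬝ᵥ (W *ᵥ y)) := by
    have h2 := Finset.sum_mul_sq_le_sq_mul_sq Finset.univ y (W *ᵥ y)
    simpa [dotProduct, sq] using h2
  rcases eq_or_lt_of_le hyy with h0 | h0
  · rw [← h0, mul_zero]
    exact hWW
  · have h2 : (c * (y ⬝ᵥ y)) ^ 2 ≤ (y ⬝ᵥ (W *ᵥ y)) ^ 2 :=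
      pow_le_pow_left₀ (mul_nonneg hc hyy) h1 2
    have h3 := h2.trans hcs
    rw [mul_pow] at h3
    nlinarith [h3, h0]

lemma vlb_sortedEigs_aux {N : ℕ} (hN : 1 ≤ N) (f : Fin N → ℝ) (i : Fin N) :
    f i ≤ (f ∘ Tuple.sort f) ⟨N - 1, by omega⟩ ∧ (f ∘ Tuple.sort f) ⟨0, by omega⟩ ≤ f i := by
  have hmono := Tuple.monotone_sort f
  have hi : f i = (f ∘ Tuple.sort f) ((Tuple.sort f).symm i) := by simp
  constructor
  · rw [hi]
    refine hmono ?_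
    rw [Fin.le_def]
    have := ((Tuple.sort f).symm i).isLt
    simp only []
    omega
  · rw [hi]
    refine hmono ?_
    rw [Fin.le_def]
    simp

end Helpers

section Main

/-- Main inequality, stated with abstract data. -/
lemma vlb_main {N : ℕ} (hN : 2 ≤ N) (L : Matrix (Fin N) (Fin N) ℝ)
    (hLsym : Lᵀ = L) (hL1 : L *ᵥ (fun _ => (1 : ℝ)) = 0)
    (lamN : ℝ) (hlamN : (lamN • (1 : Matrix (Fin N) (Fin N) ℝ) - L).PosSemidef)
    (β : ℕ → ℝ) (hβ0 : ∀ t, 1 ≤ t → 0 ≤ β t) (hβ1 : ∀ t, 1 ≤ t → lamN * β t ≤ 1)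
    (hlamN0 : 0 ≤ lamN)
    (s : ℝ) (hs : 0 < s)
    (Sv : Matrix (Fin N) (Fin N) ℝ) (hSv : Sv.PosSemidef)
    (lam1 : ℝ) (hlam1 : 0 ≤ lam1)
    (hlam1psd : (Sv - lam1 • (1 : Matrix (Fin N) (Fin N) ℝ)).PosSemidef)
    (γ : ℕ → ℝ) (hγ : ∀ j, 0 ≤ γ j)
    (Φ : ℕ → ℕ → Matrix (Fin N) (Fin N) ℝ)
    (hΦdiag : ∀ k : ℕ, Φ k k = 1)
    (hΦrec : ∀ k j : ℕ, 1 ≤ j → j ≤ k → Φ (k + 1) j = (1 - β k • L) * Φ k j)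
    (k : ℕ) (hk : 1 ≤ k) (i : Fin N) :
    s / (N : ℝ) +
        s * (1 - 1 / (N : ℝ)) *
          ((1 / (k : ℝ)) * ∑ j ∈ Finset.Icc 1 k,
            ∏ t ∈ Finset.Icc j k, (1 - lamN * β t) ^ 2) +
        (lam1 / (N : ℝ) ^ 2) * ((1 / (k : ℝ)) * ∑ j ∈ Finset.Icc 1 (k - 1), γ j) ≤
      (1 / (k : ℝ)) *
        ((∑ j ∈ Finset.Icc 1 k,
            (Φ k j * (s • (1 : Matrix (Fin N) (Fin N) ℝ)) * (Φ k j)ᵀ) i i) +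
          ∑ j ∈ Finset.Icc 1 (k - 1), γ j * (Φ k (j + 1) * Sv * (Φ k (j + 1))ᵀ) i i) := by
  have hNpos : (0 : ℝ) < N := by positivity
  have hN1 : (1 : ℝ) ≤ N := by exact_mod_cast (by omega : 1 ≤ N)
  have hkpos : (0 : ℝ) < k := by exact_mod_cast hk
  have h1N : (0 : ℝ) ≤ 1 - 1 / (N : ℝ) := by
    rw [sub_nonneg, div_le_one hNpos]
    exact hN1
  -- the weight matrices
  set W : ℕ → Matrix (Fin N) (Fin N) ℝ := fun t => 1 - β t • L with hWdef
  have hWsym : ∀ t, (W t)ᵀ = W t := by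
    intro t
    simp [hWdef, Matrix.transpose_sub, Matrix.transpose_smul, hLsym]
  have hW1 : ∀ t, W t *ᵥ (fun _ => (1 : ℝ)) = fun _ => (1 : ℝ) := by
    intro t
    simp [hWdef, Matrix.sub_mulVec, smul_mulVec, hL1, Matrix.one_mulVec]
  have hWpsd : ∀ t, 1 ≤ t →
      (W t - (1 - lamN * β t) • (1 : Matrix (Fin N) (Fin N) ℝ)).PosSemidef := by
    intro t ht
    have heq : W t - (1 - lamN * β t) • (1 : Matrix (Fin N) (Fin N) ℝ)
        = β t • (lamN • (1 : Matrix (Fin N) (Fin N) ℝ) - L) := by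
      simp only [hWdef, smul_sub, smul_smul]
      module
    rw [heq]
    exact vlb_psd_smul hlamN (hβ0 t ht)
  -- column sums of Φ are one
  have colsum : ∀ m j, 1 ≤ j → j ≤ m →
      (Φ m j)ᵀ *ᵥ (fun _ => (1 : ℝ)) = fun _ => (1 : ℝ) := by
    intro m j hj hjm
    induction m, hjm using Nat.le_induction with
    | base => simp [hΦdiag]
    | succ m hm ih =>
        rw [hΦrec m j hj hm, Matrix.transpose_mul, ← Matrix.mulVec_mulVec]
        rw [show (1 - β m • L)ᵀ = W m from hWsym m, hW1, ih]
  -- row sums of Φ are one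
  have rowsum : ∀ m j, 1 ≤ j → j ≤ m →
      Φ m j *ᵥ (fun _ => (1 : ℝ)) = fun _ => (1 : ℝ) := by
    intro m j hj hjm
    induction m, hjm using Nat.le_induction with
    | base => simp [hΦdiag]
    | succ m hm ih =>
        rw [hΦrec m j hj hm, ← Matrix.mulVec_mulVec, ih]
        exact hW1 m
  -- singular value product bound
  have normbound : ∀ m j, 1 ≤ j → j ≤ m → ∀ y : Fin N → ℝ,
      (∏ t ∈ Finset.Icc j (m - 1), (1 - lamN * β t) ^ 2) * (y ⬝ᵥ y) ≤
        ((Φ m j)ᵀ *ᵥ y) ⬝ᵥ ((Φ m j)ᵀ *ᵥ y) := by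
    intro m j hj hjm
    induction m, hjm using Nat.le_induction with
    | base =>
        intro y
        have he : Finset.Icc j (j - 1) = ∅ := Finset.Icc_eq_empty (by omega)
        simp [hΦdiag, he]
    | succ m hm ih =>
        intro y
        have hm1 : 1 ≤ m := le_trans hj hm
        have hΦT : (Φ (m + 1) j)ᵀ *ᵥ y = (Φ m j)ᵀ *ᵥ (W m *ᵥ y) := by
          rw [hΦrec m j hj hm, Matrix.transpose_mul, ← Matrix.mulVec_mulVec,
            show (1 - β m • L)ᵀ = W m from hWsym m]
        have hc0 : 0 ≤ 1 - lamN * β m := by linarith [hβ1 m hm1]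
        have h2 := vlb_sv_sq_bound (W m) hc0 (hWpsd m hm1) y
        have h3 := ih (W m *ᵥ y)
        have hprodnn : 0 ≤ ∏ t ∈ Finset.Icc j (m - 1), (1 - lamN * β t) ^ 2 :=
          Finset.prod_nonneg fun t _ => sq_nonneg _
        have hsplit : (∏ t ∈ Finset.Icc j (m + 1 - 1), (1 - lamN * β t) ^ 2)
            = (∏ t ∈ Finset.Icc j (m - 1), (1 - lamN * β t) ^ 2) * (1 - lamN * β m) ^ 2 := by
          have hmm : m - 1 + 1 = m := by omega
          rw [Nat.add_sub_cancel, ← hmm, Finset.prod_Icc_succ_top (by omega)]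
          simp only [hmm]
        rw [hΦT, hsplit]
        calc (∏ t ∈ Finset.Icc j (m - 1), (1 - lamN * β t) ^ 2) * (1 - lamN * β m) ^ 2 *
              (y ⬝ᵥ y)
            = (∏ t ∈ Finset.Icc j (m - 1), (1 - lamN * β t) ^ 2) *
              ((1 - lamN * β m) ^ 2 * (y ⬝ᵥ y)) := by ring
          _ ≤ (∏ t ∈ Finset.Icc j (m - 1), (1 - lamN * β t) ^ 2) *
              ((W m *ᵥ y) ⬝ᵥ (W m *ᵥ y)) := mul_le_mul_of_nonneg_left h2 hprodnn
          _ ≤ ((Φ m j)ᵀ *ᵥ (W m *ᵥ y)) ⬝ᵥ ((Φ m j)ᵀ *ᵥ (W m *ᵥ y)) := h3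
  -- row norm-squared lower bound
  have rowbound : ∀ m j, 1 ≤ j → j ≤ m →
      1 / (N : ℝ) + (1 - 1 / (N : ℝ)) * ∏ t ∈ Finset.Icc j (m - 1), (1 - lamN * β t) ^ 2 ≤
        ((Φ m j)ᵀ *ᵥ Pi.single i 1) ⬝ᵥ ((Φ m j)ᵀ *ᵥ Pi.single i 1) := by
    intro m j hj hjm
    set e : Fin N → ℝ := Pi.single i 1 with hedef
    set u : Fin N → ℝ := fun _ => 1 / (N : ℝ) with hudef
    set w : Fin N → ℝ := e - u with hwdef
    have hNne : (N : ℝ) ≠ 0 := ne_of_gt hNpos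
    have hu1 : u = (1 / (N : ℝ)) • (fun _ => (1 : ℝ)) := by
      funext l; simp [hudef]
    have hsum_u : (Φ m j)ᵀ *ᵥ u = u := by
      rw [hu1, Matrix.mulVec_smul, colsum m j hj hjm]
    have hdecomp : (Φ m j)ᵀ *ᵥ e = u + (Φ m j)ᵀ *ᵥ w := by
      rw [hwdef, Matrix.mulVec_sub, hsum_u]
      abel
    have huu : u ⬝ᵥ u = 1 / (N : ℝ) := by
      simp only [hudef, dotProduct]
      rw [Finset.sum_const, Finset.card_univ, Fintype.card_fin, nsmul_eq_mul]
      field_simp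
    have hww : w ⬝ᵥ w = 1 - 1 / (N : ℝ) := by
      rw [hwdef, dotProduct_sub, sub_dotProduct, sub_dotProduct]
      have h1 : e ⬝ᵥ e = 1 := by simp [hedef, dotProduct_single]
      have h2 : e ⬝ᵥ u = 1 / (N : ℝ) := by simp [hedef, hudef, single_dotProduct]
      have h3 : u ⬝ᵥ e = 1 / (N : ℝ) := by simp [hedef, hudef, dotProduct_single]
      rw [h1, h2, h3, huu]
      ring
    have hcross : u ⬝ᵥ ((Φ m j)ᵀ *ᵥ w) = 0 := by
      rw [hu1, smul_dotProduct, dotProduct_mulVec, vecMul_transpose, rowsum m j hj hjm]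
      have hzero : (fun _ => (1 : ℝ)) ⬝ᵥ w = 0 := by
        rw [hwdef, dotProduct_sub]
        have h5 : (fun _ => (1 : ℝ)) ⬝ᵥ e = 1 := by simp [hedef, dotProduct_single]
        have h6 : (fun _ => (1 : ℝ)) ⬝ᵥ u = 1 := by
          simp only [hudef, dotProduct, one_mul]
          rw [Finset.sum_const, Finset.card_univ, Fintype.card_fin, nsmul_eq_mul]
          field_simp
        rw [h5, h6]; ring
      rw [hzero, smul_eq_mul, mul_zero]
    have hnb := normbound m j hj hjm w
    rw [hww] at hnb
    have hexp : ((Φ m j)ᵀ *ᵥ e) ⬝ᵥ ((Φ m j)ᵀ *ᵥ e)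
        = u ⬝ᵥ u + 2 * (u ⬝ᵥ ((Φ m j)ᵀ *ᵥ w))
          + ((Φ m j)ᵀ *ᵥ w) ⬝ᵥ ((Φ m j)ᵀ *ᵥ w) := by
      rw [hdecomp, dotProduct_add, add_dotProduct, add_dotProduct]
      rw [show ((Φ m j)ᵀ *ᵥ w) ⬝ᵥ u = u ⬝ᵥ ((Φ m j)ᵀ *ᵥ w) from dotProduct_comm _ _]
      ring
    rw [hexp, hcross, huu]
    nlinarith [hnb]
  -- the i-th row of Φ m j as a vector
  have rowvec : ∀ m j, ((Φ m j)ᵀ *ᵥ Pi.single i 1) = fun l => Φ m j i l := by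
    intro m j
    funext l
    simp [Matrix.mulVec_single]
  -- diagonal entry for the noise part
  have diagA : ∀ m j, (Φ m j * (s • (1 : Matrix (Fin N) (Fin N) ℝ)) * (Φ m j)ᵀ) i i
      = s * (((Φ m j)ᵀ *ᵥ Pi.single i 1) ⬝ᵥ ((Φ m j)ᵀ *ᵥ Pi.single i 1)) := by
    intro m j
    rw [rowvec m j, Matrix.mul_smul, Matrix.mul_one, Matrix.smul_mul]
    simp [Matrix.mul_apply, dotProduct, Finset.mul_sum]
  -- diagonal entry for the Sv part
  have diagB : ∀ m j, (Φ m j * Sv * (Φ m j)ᵀ) i i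
      = (((Φ m j)ᵀ *ᵥ Pi.single i 1)) ⬝ᵥ (Sv *ᵥ ((Φ m j)ᵀ *ᵥ Pi.single i 1)) := by
    intro m j
    rw [rowvec m j]
    simp only [Matrix.mul_apply, dotProduct, Matrix.mulVec, Matrix.transpose_apply,
      Finset.sum_mul, Finset.mul_sum]
    rw [Finset.sum_comm]
    refine Finset.sum_congr rfl fun l _ => Finset.sum_congr rfl fun o _ => by ring
  -- termwise bound for the noise sum
  have hAterm : ∀ j ∈ Finset.Icc 1 k,
      s / (N : ℝ) + s * (1 - 1 / (N : ℝ)) * ∏ t ∈ Finset.Icc j k, (1 - lamN * β t) ^ 2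
        ≤ (Φ k j * (s • (1 : Matrix (Fin N) (Fin N) ℝ)) * (Φ k j)ᵀ) i i := by
    intro j hj
    rw [Finset.mem_Icc] at hj
    have hrb := rowbound k j hj.1 hj.2
    have hprodnn : 0 ≤ ∏ t ∈ Finset.Icc j (k - 1), (1 - lamN * β t) ^ 2 :=
      Finset.prod_nonneg fun t _ => sq_nonneg _
    have hprod_le : (∏ t ∈ Finset.Icc j k, (1 - lamN * β t) ^ 2)
        ≤ ∏ t ∈ Finset.Icc j (k - 1), (1 - lamN * β t) ^ 2 := by
      have hk1 : k - 1 + 1 = k := by omega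
      have hsplit : (∏ t ∈ Finset.Icc j k, (1 - lamN * β t) ^ 2)
          = (∏ t ∈ Finset.Icc j (k - 1), (1 - lamN * β t) ^ 2) * (1 - lamN * β k) ^ 2 := by
        rw [← hk1, Finset.prod_Icc_succ_top (by omega)]
        simp only [hk1]
      rw [hsplit]
      have hck : (1 - lamN * β k) ^ 2 ≤ 1 := by
        have hb0 := hβ0 k hk
        have hb1 := hβ1 k hk
        nlinarith [mul_nonneg hlamN0 hb0]
      nlinarith [hprodnn]
    rw [diagA k j]
    calc s / (N : ℝ) + s * (1 - 1 / (N : ℝ)) * ∏ t ∈ Finset.Icc j k, (1 - lamN * β t) ^ 2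
        ≤ s / (N : ℝ) + s * (1 - 1 / (N : ℝ)) *
            ∏ t ∈ Finset.Icc j (k - 1), (1 - lamN * β t) ^ 2 := by
          have := mul_le_mul_of_nonneg_left hprod_le (mul_nonneg hs.le h1N)
          linarith
      _ = s * (1 / (N : ℝ) + (1 - 1 / (N : ℝ)) *
            ∏ t ∈ Finset.Icc j (k - 1), (1 - lamN * β t) ^ 2) := by ring
      _ ≤ s * (((Φ k j)ᵀ *ᵥ Pi.single i 1) ⬝ᵥ ((Φ k j)ᵀ *ᵥ Pi.single i 1)) :=
          mul_le_mul_of_nonneg_left hrb hs.le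
  -- termwise bound for the Sv sum
  have hBterm : ∀ j ∈ Finset.Icc 1 (k - 1),
      γ j * (lam1 / (N : ℝ) ^ 2) ≤ γ j * (Φ k (j + 1) * Sv * (Φ k (j + 1))ᵀ) i i := by
    intro j hj
    rw [Finset.mem_Icc] at hj
    have hj1 : 1 ≤ j + 1 := by omega
    have hjk : j + 1 ≤ k := by omega
    have hrb := rowbound k (j + 1) hj1 hjk
    set v : Fin N → ℝ := (Φ k (j + 1))ᵀ *ᵥ Pi.single i 1 with hvdef
    have hvv : 1 / (N : ℝ) ≤ v ⬝ᵥ v := by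
      have hp : 0 ≤ (1 - 1 / (N : ℝ)) *
          ∏ t ∈ Finset.Icc (j + 1) (k - 1), (1 - lamN * β t) ^ 2 :=
        mul_nonneg h1N (Finset.prod_nonneg fun t _ => sq_nonneg _)
      linarith
    have hq : lam1 * (v ⬝ᵥ v) ≤ v ⬝ᵥ (Sv *ᵥ v) := by
      have h0 := vlb_psd_quad hlam1psd v
      rw [Matrix.sub_mulVec, dotProduct_sub, smul_mulVec, Matrix.one_mulVec,
        dotProduct_smul, smul_eq_mul] at h0
      linarith
    have hfin : lam1 / (N : ℝ) ^ 2 ≤ v ⬝ᵥ (Sv *ᵥ v) := by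
      have hstep1 : lam1 / (N : ℝ) ^ 2 ≤ lam1 * (1 / (N : ℝ)) := by
        rw [div_eq_mul_one_div]
        refine mul_le_mul_of_nonneg_left ?_ hlam1
        rw [div_le_div_iff₀ (by positivity) hNpos]
        nlinarith [hN1]
      have hstep2 : lam1 * (1 / (N : ℝ)) ≤ lam1 * (v ⬝ᵥ v) :=
        mul_le_mul_of_nonneg_left hvv hlam1
      linarith
    rw [diagB k (j + 1)]
    exact mul_le_mul_of_nonneg_left hfin (hγ j)
  -- summed bounds
  have hcard : (Finset.Icc 1 k).card = k := by
    rw [Nat.card_Icc]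
    omega
  have hA : (k : ℝ) * (s / (N : ℝ)) + s * (1 - 1 / (N : ℝ)) *
      ∑ j ∈ Finset.Icc 1 k, ∏ t ∈ Finset.Icc j k, (1 - lamN * β t) ^ 2
        ≤ ∑ j ∈ Finset.Icc 1 k,
            (Φ k j * (s • (1 : Matrix (Fin N) (Fin N) ℝ)) * (Φ k j)ᵀ) i i := by
    have hsum := Finset.sum_le_sum hAterm
    rw [Finset.sum_add_distrib, Finset.sum_const, hcard, ← Finset.mul_sum] at hsum
    simpa [nsmul_eq_mul] using hsum
  have hB : (lam1 / (N : ℝ) ^ 2) * ∑ j ∈ Finset.Icc 1 (k - 1), γ j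
      ≤ ∑ j ∈ Finset.Icc 1 (k - 1), γ j * (Φ k (j + 1) * Sv * (Φ k (j + 1))ᵀ) i i := by
    rw [Finset.mul_sum]
    refine Finset.sum_le_sum fun j hj => ?_
    have := hBterm j hj
    linarith [this, mul_comm (γ j) (lam1 / (N : ℝ) ^ 2)]
  set P : ℝ := ∑ j ∈ Finset.Icc 1 k, ∏ t ∈ Finset.Icc j k, (1 - lamN * β t) ^ 2 with hPdef
  set X : ℝ := ∑ j ∈ Finset.Icc 1 (k - 1), γ j with hXdef
  have hkne : (k : ℝ) ≠ 0 := ne_of_gt hkpos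
  have hgoal : s / (N : ℝ) + s * (1 - 1 / (N : ℝ)) * ((1 / (k : ℝ)) * P) +
      (lam1 / (N : ℝ) ^ 2) * ((1 / (k : ℝ)) * X)
      = (1 / (k : ℝ)) * ((k : ℝ) * (s / (N : ℝ)) + s * (1 - 1 / (N : ℝ)) * P +
          (lam1 / (N : ℝ) ^ 2) * X) := by
    field_simp
  rw [hgoal]
  refine mul_le_mul_of_nonneg_left ?_ (by positivity)
  linarith [hA, hB]

end Main

/-- The eigenvalues of a Hermitian real matrix, sorted in increasing order. -/
noncomputable def sortedEigs {N : ℕ} (L : Matrix (Fin N) (Fin N) ℝ) (hL : L.IsHermitian) :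
    Fin N → ℝ :=
  hL.eigenvalues ∘ Tuple.sort hL.eigenvalues

/-- Pointwise variance lower bound for the consensus+innovations detector with
identical sensors (`S_η = s·I`) and weights `β_k = b0/(a+k^τ)`:
`k·σ_i²(k) ≥ s/N + s(1−1/N)·Z_β(k) + (λ₁(S_v)/N²)·χ_β(k)`. -/
theorem variance_lower_bound (N : ℕ) (hN : 2 ≤ N) (G : SimpleGraph (Fin N))
    [DecidableRel G.Adj] (hconn : G.Connected) (τ b0 a : ℝ) (hτ : 0 ≤ τ) (hb0 : 0 < b0)
    (ha : b0 * sortedEigs (G.lapMatrix ℝ)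
        (SimpleGraph.posSemidef_lapMatrix ℝ G).1 ⟨N - 1, by omega⟩ ≤ a)
    (s : ℝ) (hs : 0 < s)
    (Sv : Matrix (Fin N) (Fin N) ℝ) (hSv : Sv.PosSemidef)
    (Φ : ℕ → ℕ → Matrix (Fin N) (Fin N) ℝ)
    (hΦdiag : ∀ k : ℕ, Φ k k = 1)
    (hΦrec : ∀ k j : ℕ, 1 ≤ j → j ≤ k →
      Φ (k + 1) j = (1 - (b0 / (a + (k : ℝ) ^ τ)) • G.lapMatrix ℝ) * Φ k j)
    (σ2 : Fin N → ℕ → ℝ)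
    (hσ : ∀ (i : Fin N) (k : ℕ), σ2 i k =
      (1 / (k : ℝ) ^ 2) *
        ((∑ j ∈ Finset.Icc 1 k,
            (Φ k j * (s • (1 : Matrix (Fin N) (Fin N) ℝ)) * (Φ k j)ᵀ) i i) +
          ∑ j ∈ Finset.Icc 1 (k - 1),
            ((j : ℝ) * (b0 / (a + (j : ℝ) ^ τ))) ^ 2 *
              (Φ k (j + 1) * Sv * (Φ k (j + 1))ᵀ) i i)) :
    ∀ (k : ℕ), 1 ≤ k → ∀ (i : Fin N),
      s / (N : ℝ) +
          s * (1 - 1 / (N : ℝ)) *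
            ((1 / (k : ℝ)) * ∑ j ∈ Finset.Icc 1 k,
              ∏ t ∈ Finset.Icc j k,
                (1 - sortedEigs (G.lapMatrix ℝ)
                    (SimpleGraph.posSemidef_lapMatrix ℝ G).1 ⟨N - 1, by omega⟩ *
                  (b0 / (a + (t : ℝ) ^ τ))) ^ 2) +
          (sortedEigs Sv hSv.1 ⟨0, by omega⟩ / (N : ℝ) ^ 2) *
            ((1 / (k : ℝ)) * ∑ j ∈ Finset.Icc 1 (k - 1),
              ((j : ℝ) * (b0 / (a + (j : ℝ) ^ τ))) ^ 2) ≤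
        (k : ℝ) * σ2 i k := by
  intro k hk i
  have hLpsd := SimpleGraph.posSemidef_lapMatrix ℝ G
  have hL : (G.lapMatrix ℝ).IsHermitian := hLpsd.1
  have hkpos : (0 : ℝ) < k := by exact_mod_cast hk
  have hkne : (k : ℝ) ≠ 0 := ne_of_gt hkpos
  -- rewrite the RHS
  have hc : (k : ℝ) * (1 / (k : ℝ) ^ 2) = 1 / (k : ℝ) := by
    field_simp
  rw [hσ i k]
  conv_rhs => rw [← mul_assoc, hc]
  -- facts about the Laplacian
  have hLsym : (G.lapMatrix ℝ)ᵀ = G.lapMatrix ℝ := by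
    have := hL.eq
    rwa [Matrix.conjTranspose_eq_transpose_of_trivial] at this
  have hL1 : (G.lapMatrix ℝ) *ᵥ (fun _ => (1 : ℝ)) = 0 :=
    SimpleGraph.lapMatrix_mulVec_const_eq_zero G
  have hlamN_max : ∀ o : Fin N, hL.eigenvalues o ≤
      sortedEigs (G.lapMatrix ℝ) hL ⟨N - 1, by omega⟩ := by
    intro o
    exact (vlb_sortedEigs_aux (by omega) hL.eigenvalues o).1
  have hlamNpsd : ((sortedEigs (G.lapMatrix ℝ) hL ⟨N - 1, by omega⟩) •
      (1 : Matrix (Fin N) (Fin N) ℝ) - G.lapMatrix ℝ).PosSemidef :=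
    vlb_psd_smul_one_sub hL hlamN_max
  have hlamN0 : 0 ≤ sortedEigs (G.lapMatrix ℝ) hL ⟨N - 1, by omega⟩ :=
    hLpsd.eigenvalues_nonneg _
  have ha0 : 0 ≤ a := le_trans (mul_nonneg hb0.le hlamN0) ha
  have hpow : ∀ t : ℕ, 1 ≤ t → (1 : ℝ) ≤ (t : ℝ) ^ τ := by
    intro t ht
    exact Real.one_le_rpow (by exact_mod_cast ht) hτ
  have hβ0 : ∀ t : ℕ, 1 ≤ t → 0 ≤ b0 / (a + (t : ℝ) ^ τ) := by
    intro t ht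
    have := hpow t ht
    positivity
  have hβ1 : ∀ t : ℕ, 1 ≤ t →
      sortedEigs (G.lapMatrix ℝ) hL ⟨N - 1, by omega⟩ * (b0 / (a + (t : ℝ) ^ τ)) ≤ 1 := by
    intro t ht
    have h1 := hpow t ht
    have hpos : (0 : ℝ) < a + (t : ℝ) ^ τ := by linarith
    rw [mul_div_assoc'] at *
    rw [div_le_one hpos]
    calc sortedEigs (G.lapMatrix ℝ) hL ⟨N - 1, by omega⟩ * b0
        = b0 * sortedEigs (G.lapMatrix ℝ) hL ⟨N - 1, by omega⟩ := by ring
      _ ≤ a := ha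
      _ ≤ a + (t : ℝ) ^ τ := by linarith
  -- facts about Sv
  have hlam1_min : ∀ o : Fin N, sortedEigs Sv hSv.1 ⟨0, by omega⟩ ≤ hSv.1.eigenvalues o := by
    intro o
    exact (vlb_sortedEigs_aux (by omega) hSv.1.eigenvalues o).2
  have hlam1psd : (Sv - (sortedEigs Sv hSv.1 ⟨0, by omega⟩) •
      (1 : Matrix (Fin N) (Fin N) ℝ)).PosSemidef :=
    vlb_psd_sub_smul_one hSv.1 hlam1_min
  have hlam1_0 : 0 ≤ sortedEigs Sv hSv.1 ⟨0, by omega⟩ := hSv.eigenvalues_nonneg _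
  exact vlb_main hN (G.lapMatrix ℝ) hLsym hL1 _ hlamNpsd
    (fun t => b0 / (a + (t : ℝ) ^ τ)) hβ0 hβ1 hlamN0 s hs Sv hSv _ hlam1_0 hlam1psd
    (fun j => ((j : ℝ) * (b0 / (a + (j : ℝ) ^ τ))) ^ 2) (fun j => sq_nonneg _)
    Φ hΦdiag hΦrec k hk i
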